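/- Let k be a field and H a Hopf algebra over k with antipode S, comultiplication Δ(h) = h₁ ⊗ h₂ and counit ε. Let M be a right H-Hopf module: M is a right H-module and a right H-comodule with coaction ρ(m) = m₍₀₎ ⊗ m₍₁₎ such that ρ(m·h) = (m₍₀₎·h₁) ⊗ (m₍₁₎h₂) for all m ∈ M, h ∈ H. Define E_M : M → M by E_M(m) = m₍₀₎·S(m₍₁₎) and ε̃ : H → H by ε̃(h) = ε(h)·1_H. Then (M, ε̃, E_M) is a right Rota-Baxter paired H-module of weight −1: E_M(m)·ε̃(h) = E_M(E_M(m)·h) + E_M(m·ε̃(h)) − E_M(m·h) for all h ∈ H, m ∈ M. -/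

import Mathlib

open scoped TensorProduct

open Coalgebra HopfAlgebra

namespace Stmt14Aux

variable {k : Type*} [CommRing k] {H : Type*} [Ring H] [HopfAlgebra k H]

noncomputable def tri {V : Type*} [AddCommGroup V] [Module k V]
    (f : H →ₗ[k] H →ₗ[k] H →ₗ[k] V) : H ⊗[k] (H ⊗[k] H) →ₗ[k] V :=
  TensorProduct.lift ((TensorProduct.lift.equiv (RingHom.id k) H H V).toLinearMap ∘ₗ f)

@[simp] lemma tri_tmul {V : Type*} [AddCommGroup V] [Module k V]
    (f : H →ₗ[k] H →ₗ[k] H →ₗ[k] V) (x y z : H) :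
    tri f (x ⊗ₜ[k] (y ⊗ₜ[k] z)) = f x y z := rfl

lemma hR {V : Type*} {ι : Type*} [AddCommGroup V] [Module k V]
    (g : H →ₗ[k] V) {c : H} (r : Repr k c ι) :
    ∑ i ∈ r.index, counit (R := k) (r.right i) • g (r.left i) = g c := by
  have h := sum_tmul_counit_eq (R := k) r
  have := congrArg (fun t => g ((TensorProduct.rid k H) t)) h
  simp only [map_sum, TensorProduct.rid_tmul, map_smul, one_smul] at this
  exact this

lemma hL {V : Type*} {ι : Type*} [AddCommGroup V] [Module k V]
    (g : H →ₗ[k] V) {c : H} (r : Repr k c ι) :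
    ∑ i ∈ r.index, counit (R := k) (r.left i) • g (r.right i) = g c := by
  have h := sum_counit_tmul_eq (R := k) r
  have := congrArg (fun t => g ((TensorProduct.lid k H) t)) h
  simp only [map_sum, TensorProduct.lid_tmul, map_smul, one_smul] at this
  exact this

noncomputable def mulRepr {ι₁ ι₂ : Type*} {x y : H} (r1 : Repr k x ι₁) (r2 : Repr k y ι₂) :
    Repr k (x * y) (ι₁ × ι₂) where
  index := r1.index ×ˢ r2.index
  left := fun p => r1.left p.1 * r2.left p.2
  right := fun p => r1.right p.1 * r2.right p.2
  eq := by
    rw [Finset.sum_product, Bialgebra.comul_mul, ← r1.eq, ← r2.eq,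
      Finset.sum_mul_sum]
    simp [Algebra.TensorProduct.tmul_mul_tmul]

theorem antipode_mul (a b : H) :
    antipode (R := k) (a * b) = antipode (R := k) b * antipode (R := k) a := by
  set ra := ℛ k a with hra
  set rb := ℛ k b with hrb
  -- the big middle expression, in "rights" normal form
  set X : H := ∑ i ∈ ra.index, ∑ p ∈ (ℛ k (ra.right i)).index, ∑ j ∈ rb.index,
      ∑ q ∈ (ℛ k (rb.right j)).index,
      antipode (R := k) (ra.left i * rb.left j) *
        ((ℛ k (ra.right i)).left p *
          ((ℛ k (rb.right j)).left q *
            (antipode (R := k) ((ℛ k (rb.right j)).right q) *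
              antipode (R := k) ((ℛ k (ra.right i)).right p)))) with hX
  -- Claim A : X = antipode (a * b)
  have claimA : X = antipode (R := k) (a * b) := by
    rw [hX]
    calc
      ∑ i ∈ ra.index, ∑ p ∈ (ℛ k (ra.right i)).index, ∑ j ∈ rb.index,
          ∑ q ∈ (ℛ k (rb.right j)).index,
          antipode (R := k) (ra.left i * rb.left j) *
            ((ℛ k (ra.right i)).left p *
              ((ℛ k (rb.right j)).left q *
                (antipode (R := k) ((ℛ k (rb.right j)).right q) *
                  antipode (R := k) ((ℛ k (ra.right i)).right p))))
        = ∑ i ∈ ra.index, ∑ p ∈ (ℛ k (ra.right i)).index, ∑ j ∈ rb.index,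
            counit (R := k) (rb.right j) •
              (antipode (R := k) (ra.left i * rb.left j) *
                ((ℛ k (ra.right i)).left p *
                  antipode (R := k) ((ℛ k (ra.right i)).right p))) := by
          refine Finset.sum_congr rfl fun i _ => Finset.sum_congr rfl fun p _ =>
            Finset.sum_congr rfl fun j _ => ?_
          have h1 : ∑ q ∈ (ℛ k (rb.right j)).index,
              (ℛ k (rb.right j)).left q *
                (antipode (R := k) ((ℛ k (rb.right j)).right q) *
                  antipode (R := k) ((ℛ k (ra.right i)).right p)) =
              counit (R := k) (rb.right j) •
                antipode (R := k) ((ℛ k (ra.right i)).right p) := by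
            calc
              ∑ q ∈ (ℛ k (rb.right j)).index,
                  (ℛ k (rb.right j)).left q *
                    (antipode (R := k) ((ℛ k (rb.right j)).right q) *
                      antipode (R := k) ((ℛ k (ra.right i)).right p))
                = (∑ q ∈ (ℛ k (rb.right j)).index,
                      (ℛ k (rb.right j)).left q *
                        antipode (R := k) ((ℛ k (rb.right j)).right q)) *
                    antipode (R := k) ((ℛ k (ra.right i)).right p) := by
                  rw [Finset.sum_mul]; simp_rw [mul_assoc]
              _ = _ := by
                  rw [sum_mul_antipode_eq_smul (ℛ k (rb.right j)), smul_mul_assoc,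
                    one_mul]
          rw [← Finset.mul_sum, ← Finset.mul_sum, h1, mul_smul_comm, mul_smul_comm]
      _ = ∑ i ∈ ra.index, ∑ p ∈ (ℛ k (ra.right i)).index,
            antipode (R := k) (ra.left i * b) *
              ((ℛ k (ra.right i)).left p *
                antipode (R := k) ((ℛ k (ra.right i)).right p)) := by
          refine Finset.sum_congr rfl fun i _ => Finset.sum_congr rfl fun p _ => ?_
          have key := hR
            (g := (LinearMap.mulRight k ((ℛ k (ra.right i)).left p *
              antipode (R := k) ((ℛ k (ra.right i)).right p))) ∘ₗ
              antipode (R := k) ∘ₗ LinearMap.mulLeft k (ra.left i)) rb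
          simp only [LinearMap.coe_comp, Function.comp_apply,
            LinearMap.mulRight_apply, LinearMap.mulLeft_apply] at key
          exact key
      _ = ∑ i ∈ ra.index, counit (R := k) (ra.right i) •
            antipode (R := k) (ra.left i * b) := by
          refine Finset.sum_congr rfl fun i _ => ?_
          rw [← Finset.mul_sum, sum_mul_antipode_eq_smul (ℛ k (ra.right i)),
            mul_smul_comm, mul_one]
      _ = antipode (R := k) (a * b) := by
          have key := hR (g := antipode (R := k) ∘ₗ LinearMap.mulRight k b) ra
          simp only [LinearMap.coe_comp, Function.comp_apply,
            LinearMap.mulRight_apply] at key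
          exact key
  -- b-swap
  have hb := sum_tmul_tmul_eq (R := k) rb (fun j => ℛ k (rb.left j))
    (fun j => ℛ k (rb.right j))
  have hswapb : X = ∑ i ∈ ra.index, ∑ p ∈ (ℛ k (ra.right i)).index,
      ∑ j ∈ rb.index, ∑ q ∈ (ℛ k (rb.left j)).index,
      antipode (R := k) (ra.left i * (ℛ k (rb.left j)).left q) *
        ((ℛ k (ra.right i)).left p *
          ((ℛ k (rb.left j)).right q *
            (antipode (R := k) (rb.right j) *
              antipode (R := k) ((ℛ k (ra.right i)).right p)))) := by
    rw [hX]
    refine Finset.sum_congr rfl fun i _ => Finset.sum_congr rfl fun p _ => ?_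
    have h2 := congrArg (tri (LinearMap.mk₂ k
      (fun b₁ b₂ => LinearMap.mulLeft k (antipode (R := k) (ra.left i * b₁)) ∘ₗ
        LinearMap.mulLeft k ((ℛ k (ra.right i)).left p) ∘ₗ
        LinearMap.mulLeft k b₂ ∘ₗ
        LinearMap.mulRight k (antipode (R := k) ((ℛ k (ra.right i)).right p)) ∘ₗ
        antipode (R := k))
      (fun b₁ b₁' b₂ => by ext z; simp [mul_add, add_mul])
      (fun c b₁ b₂ => by ext z; simp [mul_smul_comm, smul_mul_assoc])
      (fun b₁ b₂ b₂' => by ext z; simp [mul_add, add_mul])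
      (fun c b₁ b₂ => by ext z; simp [mul_smul_comm, smul_mul_assoc]))) hb
    simp only [map_sum, tri_tmul, LinearMap.mk₂_apply, LinearMap.coe_comp,
      Function.comp_apply, LinearMap.mulLeft_apply, LinearMap.mulRight_apply] at h2
    exact h2.symm
  -- a-swap
  have ha := sum_tmul_tmul_eq (R := k) ra (fun i => ℛ k (ra.left i))
    (fun i => ℛ k (ra.right i))
  have hswapa : X = ∑ i ∈ ra.index, ∑ p ∈ (ℛ k (ra.left i)).index,
      ∑ j ∈ rb.index, ∑ q ∈ (ℛ k (rb.left j)).index,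
      antipode (R := k) ((ℛ k (ra.left i)).left p * (ℛ k (rb.left j)).left q) *
        ((ℛ k (ra.left i)).right p *
          ((ℛ k (rb.left j)).right q *
            (antipode (R := k) (rb.right j) *
              antipode (R := k) (ra.right i)))) := by
    rw [hswapb]
    set L : H ⊗[k] (H ⊗[k] H) →ₗ[k] H :=
      ∑ j ∈ rb.index, ∑ q ∈ (ℛ k (rb.left j)).index,
        tri (LinearMap.mk₂ k
          (fun a₁ a₂ => LinearMap.mulLeft k
              (antipode (R := k) (a₁ * (ℛ k (rb.left j)).left q)) ∘ₗ
            LinearMap.mulLeft k a₂ ∘ₗ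
            LinearMap.mulLeft k ((ℛ k (rb.left j)).right q) ∘ₗ
            LinearMap.mulLeft k (antipode (R := k) (rb.right j)) ∘ₗ
            antipode (R := k))
          (fun a₁ a₁' a₂ => by ext z; simp [mul_add, add_mul])
          (fun c a₁ a₂ => by ext z; simp [mul_smul_comm, smul_mul_assoc])
          (fun a₁ a₂ a₂' => by ext z; simp [mul_add, add_mul])
          (fun c a₁ a₂ => by ext z; simp [mul_smul_comm, smul_mul_assoc]))
      with hLdef
    have hLpure : ∀ (x y z : H), L (x ⊗ₜ[k] (y ⊗ₜ[k] z)) =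
        ∑ j ∈ rb.index, ∑ q ∈ (ℛ k (rb.left j)).index,
        antipode (R := k) (x * (ℛ k (rb.left j)).left q) *
          (y * ((ℛ k (rb.left j)).right q *
            (antipode (R := k) (rb.right j) * antipode (R := k) z))) := by
      intro x y z
      rw [hLdef]
      simp only [LinearMap.coe_sum, Finset.sum_apply, tri_tmul,
        LinearMap.mk₂_apply, LinearMap.coe_comp, Function.comp_apply,
        LinearMap.mulLeft_apply, LinearMap.mulRight_apply]
    have h3 := congrArg L ha
    simp only [map_sum] at h3
    calc
      ∑ i ∈ ra.index, ∑ p ∈ (ℛ k (ra.right i)).index, ∑ j ∈ rb.index,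
          ∑ q ∈ (ℛ k (rb.left j)).index,
          antipode (R := k) (ra.left i * (ℛ k (rb.left j)).left q) *
            ((ℛ k (ra.right i)).left p *
              ((ℛ k (rb.left j)).right q *
                (antipode (R := k) (rb.right j) *
                  antipode (R := k) ((ℛ k (ra.right i)).right p))))
        = ∑ i ∈ ra.index, ∑ p ∈ (ℛ k (ra.right i)).index,
            L (ra.left i ⊗ₜ[k] ((ℛ k (ra.right i)).left p ⊗ₜ[k]
              (ℛ k (ra.right i)).right p)) := by
          refine Finset.sum_congr rfl fun i _ => Finset.sum_congr rfl fun p _ => ?_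
          rw [hLpure]
      _ = ∑ i ∈ ra.index, ∑ p ∈ (ℛ k (ra.left i)).index,
            L ((ℛ k (ra.left i)).left p ⊗ₜ[k] ((ℛ k (ra.left i)).right p ⊗ₜ[k]
              ra.right i)) := h3.symm
      _ = _ := by
          refine Finset.sum_congr rfl fun i _ => Finset.sum_congr rfl fun p _ => ?_
          rw [hLpure]
  -- Claim B : X = antipode b * antipode a
  have claimB : X = antipode (R := k) b * antipode (R := k) a := by
    rw [hswapa]
    calc
      ∑ i ∈ ra.index, ∑ p ∈ (ℛ k (ra.left i)).index, ∑ j ∈ rb.index,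
          ∑ q ∈ (ℛ k (rb.left j)).index,
          antipode (R := k) ((ℛ k (ra.left i)).left p * (ℛ k (rb.left j)).left q) *
            ((ℛ k (ra.left i)).right p *
              ((ℛ k (rb.left j)).right q *
                (antipode (R := k) (rb.right j) * antipode (R := k) (ra.right i))))
        = ∑ i ∈ ra.index, ∑ j ∈ rb.index, ∑ p ∈ (ℛ k (ra.left i)).index,
            ∑ q ∈ (ℛ k (rb.left j)).index,
            antipode (R := k) ((ℛ k (ra.left i)).left p * (ℛ k (rb.left j)).left q) *
              ((ℛ k (ra.left i)).right p *
                ((ℛ k (rb.left j)).right q *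
                  (antipode (R := k) (rb.right j) * antipode (R := k) (ra.right i)))) := by
          exact Finset.sum_congr rfl fun i _ => Finset.sum_comm
      _ = ∑ i ∈ ra.index, ∑ j ∈ rb.index,
            counit (R := k) (ra.left i * rb.left j) •
              (antipode (R := k) (rb.right j) * antipode (R := k) (ra.right i)) := by
          refine Finset.sum_congr rfl fun i _ => Finset.sum_congr rfl fun j _ => ?_
          rw [← Finset.sum_product']
          have : ∀ pq : (ℛ k (ra.left i)).ι × (ℛ k (rb.left j)).ι,
              antipode (R := k) ((ℛ k (ra.left i)).left pq.1 *
                  (ℛ k (rb.left j)).left pq.2) *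
                ((ℛ k (ra.left i)).right pq.1 *
                  ((ℛ k (rb.left j)).right pq.2 *
                    (antipode (R := k) (rb.right j) *
                      antipode (R := k) (ra.right i)))) =
              (antipode (R := k) ((mulRepr (ℛ k (ra.left i)) (ℛ k (rb.left j))).left pq) *
                  (mulRepr (ℛ k (ra.left i)) (ℛ k (rb.left j))).right pq) *
                (antipode (R := k) (rb.right j) * antipode (R := k) (ra.right i)) := by
            intro pq
            simp only [mulRepr]
            noncomm_ring
          rw [Finset.sum_congr rfl fun pq _ => this pq, ← Finset.sum_mul]
          have hsum := sum_antipode_mul_eq_smul (R := k)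
            (mulRepr (ℛ k (ra.left i)) (ℛ k (rb.left j)))
          dsimp only [mulRepr] at hsum ⊢
          rw [hsum, smul_mul_assoc, one_mul]
      _ = ∑ i ∈ ra.index, counit (R := k) (ra.left i) •
            ∑ j ∈ rb.index, counit (R := k) (rb.left j) •
              (antipode (R := k) (rb.right j) * antipode (R := k) (ra.right i)) := by
          refine Finset.sum_congr rfl fun i _ => ?_
          rw [Finset.smul_sum]
          exact Finset.sum_congr rfl fun j _ => by
            rw [Bialgebra.counit_mul, mul_smul]
      _ = ∑ i ∈ ra.index, counit (R := k) (ra.left i) •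
            (antipode (R := k) b * antipode (R := k) (ra.right i)) := by
          refine Finset.sum_congr rfl fun i _ => ?_
          congr 1
          have key := hL (g := LinearMap.mulRight k
            (antipode (R := k) (ra.right i)) ∘ₗ antipode (R := k)) rb
          simp only [LinearMap.coe_comp, Function.comp_apply,
            LinearMap.mulRight_apply] at key
          exact key
      _ = antipode (R := k) b * antipode (R := k) a := by
          have key := hL (g := LinearMap.mulLeft k
            (antipode (R := k) b) ∘ₗ antipode (R := k)) ra
          simp only [LinearMap.coe_comp, Function.comp_apply,
            LinearMap.mulLeft_apply] at key
          exact key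
  rw [← claimA, claimB]

theorem counit_antipode (h : H) :
    counit (R := k) (antipode (R := k) (A := H) h) = counit (R := k) h := by
  have h1 := sum_antipode_mul_eq_smul (R := k) (ℛ k h)
  have h2 := congrArg (Coalgebra.counit (R := k) (A := H)) h1
  simp only [map_sum, Bialgebra.counit_mul, map_smul, Bialgebra.counit_one,
    smul_eq_mul, mul_one] at h2
  rw [← h2]
  have key := hR (g := (Coalgebra.counit (R := k) (A := H)) ∘ₗ
    antipode (R := k)) (ℛ k h)
  simp only [LinearMap.coe_comp, Function.comp_apply] at key
  rw [← key]
  exact Finset.sum_congr rfl fun i _ => by rw [smul_eq_mul, mul_comm]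

end Stmt14Aux

open Stmt14Aux

/-- let `H` be a Hopf algebra over a field `k` with antipode `S`
and counit `ε`, and let `M` be a right `H`-Hopf module with right action
`mu : M ⊗ H → M` and coaction `rho : M → M ⊗ H` satisfying the Hopf-module
compatibility `ρ(m·h) = (m₍₀₎·h₁) ⊗ (m₍₁₎h₂)`. With `E_M(m) = m₍₀₎·S(m₍₁₎)` and
`ε̃(h) = ε(h)·1_H`, the triple `(M, ε̃, E_M)` is a right Rota-Baxter paired
`H`-module of weight `-1`:
`E_M(m)·ε̃(h) = E_M(E_M(m)·h) + E_M(m·ε̃(h)) - E_M(m·h)`. -/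
theorem stmt14 {k H M : Type*} [Field k] [Ring H] [HopfAlgebra k H]
    [AddCommGroup M] [Module k M]
    (mu : M ⊗[k] H →ₗ[k] M)
    (hmu_one : ∀ m : M, mu (m ⊗ₜ[k] (1 : H)) = m)
    (hmu_assoc : ∀ (m : M) (g h : H),
      mu (mu (m ⊗ₜ[k] g) ⊗ₜ[k] h) = mu (m ⊗ₜ[k] (g * h)))
    (rho : M →ₗ[k] M ⊗[k] H)
    (hcoassoc :
      (TensorProduct.assoc k M H H).toLinearMap
          ∘ₗ TensorProduct.map rho (LinearMap.id : H →ₗ[k] H) ∘ₗ rho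
        = TensorProduct.map (LinearMap.id : M →ₗ[k] M)
            (Coalgebra.comul (R := k) (A := H)) ∘ₗ rho)
    (hcounit :
      (TensorProduct.rid k M).toLinearMap
          ∘ₗ TensorProduct.map (LinearMap.id : M →ₗ[k] M)
              (Coalgebra.counit (R := k) (A := H)) ∘ₗ rho
        = LinearMap.id)
    (hHopf : rho ∘ₗ mu
      = (TensorProduct.map mu (LinearMap.mul' k H))
          ∘ₗ (TensorProduct.tensorTensorTensorComm k M H H H).toLinearMap
          ∘ₗ TensorProduct.map rho (Coalgebra.comul (R := k) (A := H))) :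
    ∀ (h : H) (m : M),
      let E : M → M := fun x =>
        mu (TensorProduct.map (LinearMap.id : M →ₗ[k] M)
          (HopfAlgebra.antipode (R := k) (A := H)) (rho x))
      mu (E m ⊗ₜ[k] (Coalgebra.counit (R := k) h • (1 : H)))
        = E (mu (E m ⊗ₜ[k] h))
          + E (mu (m ⊗ₜ[k] (Coalgebra.counit (R := k) h • (1 : H))))
          - E (mu (m ⊗ₜ[k] h)) := by
  intro h m
  intro E
  set EL : M →ₗ[k] M := mu ∘ₗ (TensorProduct.map (LinearMap.id : M →ₗ[k] M)
    (HopfAlgebra.antipode (R := k) (A := H))) ∘ₗ rho with hEL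
  have hEEL : ∀ x : M, E x = EL x := fun x => rfl
  -- key computation : E (m · g) = ε(g) • E m
  have hV : ∀ (x : M) (g : H),
      EL (mu (x ⊗ₜ[k] g)) = Coalgebra.counit (R := k) g • EL x := by
    intro x g
    have h0 := LinearMap.congr_fun hHopf (x ⊗ₜ[k] g)
    simp only [LinearMap.comp_apply, TensorProduct.map_tmul, LinearMap.id_coe,
      id_eq, LinearEquiv.coe_coe] at h0
    have claim : ∀ t : M ⊗[k] H,
        mu ((TensorProduct.map (LinearMap.id : M →ₗ[k] M)
            (HopfAlgebra.antipode (R := k) (A := H)))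
          ((TensorProduct.map mu (LinearMap.mul' k H))
            ((TensorProduct.tensorTensorTensorComm k M H H H)
              (t ⊗ₜ[k] Coalgebra.comul (R := k) g))))
        = Coalgebra.counit (R := k) g •
            mu ((TensorProduct.map (LinearMap.id : M →ₗ[k] M)
              (HopfAlgebra.antipode (R := k) (A := H))) t) := by
      intro t
      induction t using TensorProduct.induction_on with
      | zero => simp
      | add u v hu hv =>
          simp only [TensorProduct.add_tmul, map_add, hu, hv, smul_add]
      | tmul m0 m1 =>
          rw [show Coalgebra.comul (R := k) g = ∑ j ∈ (ℛ k g).index,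
              (ℛ k g).left j ⊗ₜ[k] (ℛ k g).right j from ((ℛ k g).eq).symm]
          rw [TensorProduct.tmul_sum]
          simp only [map_sum, TensorProduct.tensorTensorTensorComm_tmul,
            TensorProduct.map_tmul, LinearMap.mul'_apply, LinearMap.id_coe, id_eq]
          have step : ∀ j, mu (mu (m0 ⊗ₜ[k] (ℛ k g).left j) ⊗ₜ[k]
              HopfAlgebra.antipode (R := k) (m1 * (ℛ k g).right j)) =
              mu (m0 ⊗ₜ[k] (((ℛ k g).left j *
                HopfAlgebra.antipode (R := k) ((ℛ k g).right j)) *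
                HopfAlgebra.antipode (R := k) m1)) := by
            intro j
            rw [Stmt14Aux.antipode_mul, hmu_assoc, ← mul_assoc]
          calc
            ∑ j ∈ (ℛ k g).index, mu (mu (m0 ⊗ₜ[k] (ℛ k g).left j) ⊗ₜ[k]
                HopfAlgebra.antipode (R := k) (m1 * (ℛ k g).right j))
              = ∑ j ∈ (ℛ k g).index, mu (m0 ⊗ₜ[k] (((ℛ k g).left j *
                  HopfAlgebra.antipode (R := k) ((ℛ k g).right j)) *
                  HopfAlgebra.antipode (R := k) m1)) :=
                Finset.sum_congr rfl fun j _ => step j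
            _ = mu (m0 ⊗ₜ[k] ((∑ j ∈ (ℛ k g).index, (ℛ k g).left j *
                  HopfAlgebra.antipode (R := k) ((ℛ k g).right j)) *
                  HopfAlgebra.antipode (R := k) m1)) := by
                rw [← map_sum, ← TensorProduct.tmul_sum, ← Finset.sum_mul]
            _ = Coalgebra.counit (R := k) g •
                  mu (m0 ⊗ₜ[k] HopfAlgebra.antipode (R := k) m1) := by
                rw [sum_mul_antipode_eq_smul (ℛ k g), smul_mul_assoc, one_mul,
                  TensorProduct.tmul_smul, map_smul]
    have := claim (rho x)
    rw [hEL]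
    simp only [LinearMap.comp_apply]
    rw [h0]
    exact this
  -- idempotence of E
  have hidem : ∀ x : M, EL (EL x) = EL x := by
    intro x
    obtain ⟨s, hs⟩ := TensorProduct.exists_finset (rho x)
    have hx : EL x = ∑ i ∈ s, mu (i.1 ⊗ₜ[k] HopfAlgebra.antipode (R := k) i.2) := by
      rw [hEL]
      simp only [LinearMap.comp_apply, hs, map_sum, TensorProduct.map_tmul,
        LinearMap.id_coe, id_eq]
    have hcx : ∑ i ∈ s, Coalgebra.counit (R := k) i.2 • i.1 = x := by
      have hc := LinearMap.congr_fun hcounit x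
      simp only [LinearMap.comp_apply, LinearMap.id_coe, id_eq,
        LinearEquiv.coe_coe, hs, map_sum, TensorProduct.map_tmul,
        TensorProduct.rid_tmul, LinearMap.id_coe] at hc
      exact hc
    calc
      EL (EL x) = ∑ i ∈ s, EL (mu (i.1 ⊗ₜ[k] HopfAlgebra.antipode (R := k) i.2)) := by
          rw [hx, map_sum]
      _ = ∑ i ∈ s, Coalgebra.counit (R := k) i.2 • EL i.1 := by
          refine Finset.sum_congr rfl fun i _ => ?_
          rw [hV, Stmt14Aux.counit_antipode]
      _ = EL (∑ i ∈ s, Coalgebra.counit (R := k) i.2 • i.1) := by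
          rw [map_sum]
          exact Finset.sum_congr rfl fun i _ => (map_smul EL _ _).symm
      _ = EL x := by rw [hcx]
  -- final assembly
  simp only [hEEL]
  have t1 : mu (EL m ⊗ₜ[k] (Coalgebra.counit (R := k) h • (1 : H)))
      = Coalgebra.counit (R := k) h • EL m := by
    rw [TensorProduct.tmul_smul, map_smul, hmu_one]
  have t2 : mu (m ⊗ₜ[k] (Coalgebra.counit (R := k) h • (1 : H)))
      = Coalgebra.counit (R := k) h • m := by
    rw [TensorProduct.tmul_smul, map_smul, hmu_one]
  rw [t1, t2, hV, hV, hidem, map_smul, add_sub_cancel_right]
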